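/- Continuity/attainment of the minimax KL: Let $K, L\ge 1$, $\alpha_k>0$, and $p(i,k), p(j,k)$ be probability distributions on $\{0,\dots,L\}$ with strictly positive entries. Define $F(y) = \max\{\sum_k \alpha_k KL(y(k),p(i,k)),\ \sum_k\alpha_k KL(y(k),p(j,k))\}$ over the compact set $\mathcal{P}(\{0,\dots,L\})^K$. Then $F$ attains its minimum, and any minimizer $q$ satisfies $\sum_k\alpha_k KL(q(k),p(i,k)) = \sum_k\alpha_k KL(q(k),p(j,k))$, provided $p(i,k)\ne p(j,k)$ for some $k$. -/

import Mathlib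

open Real Finset

/-- KL divergence of distributions on `{0,…,L}` (convention `0 log 0 = 0`). -/
noncomputable def KL {L : ℕ} (y p : Fin (L + 1) → ℝ) : ℝ :=
  ∑ ℓ, y ℓ * Real.log (y ℓ / p ℓ)

lemma KL_eq {L : ℕ} (y p : Fin (L + 1) → ℝ) (hp : ∀ ℓ, 0 < p ℓ) :
    KL y p = ∑ ℓ, (y ℓ * Real.log (y ℓ) - y ℓ * Real.log (p ℓ)) := by
  unfold KL
  refine Finset.sum_congr rfl fun ℓ _ => ?_
  rcases eq_or_ne (y ℓ) 0 with h | h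
  · simp [h]
  · rw [Real.log_div h (hp ℓ).ne', mul_sub]

lemma KL_continuous {L : ℕ} (p : Fin (L + 1) → ℝ) (hp : ∀ ℓ, 0 < p ℓ) :
    Continuous fun y : Fin (L + 1) → ℝ => KL y p := by
  have h : (fun y : Fin (L + 1) → ℝ => KL y p)
      = fun y => ∑ ℓ, (y ℓ * Real.log (y ℓ) - y ℓ * Real.log (p ℓ)) := by
    funext y; exact KL_eq y p hp
  rw [h]
  exact continuous_finset_sum _ fun ℓ _ =>
    (Real.continuous_mul_log.comp (continuous_apply ℓ)).sub
      ((continuous_apply ℓ).mul continuous_const)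

lemma KL_nonneg {L : ℕ} (y p : Fin (L + 1) → ℝ) (hy : ∀ ℓ, 0 ≤ y ℓ)
    (hys : ∑ ℓ, y ℓ = 1) (hp : ∀ ℓ, 0 < p ℓ) (hps : ∑ ℓ, p ℓ = 1) :
    0 ≤ KL y p := by
  have key : ∀ ℓ : Fin (L + 1), y ℓ - p ℓ ≤ y ℓ * Real.log (y ℓ / p ℓ) := by
    intro ℓ
    rcases eq_or_lt_of_le (hy ℓ) with h | h
    · simp [← h]
      linarith [(hp ℓ).le]
    · have hlog : Real.log (p ℓ / y ℓ) ≤ p ℓ / y ℓ - 1 :=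
        Real.log_le_sub_one_of_pos (div_pos (hp ℓ) h)
      have hinv : Real.log (y ℓ / p ℓ) = - Real.log (p ℓ / y ℓ) := by
        rw [← Real.log_inv, inv_div]
      have h1 : y ℓ * Real.log (p ℓ / y ℓ) ≤ y ℓ * (p ℓ / y ℓ - 1) :=
        mul_le_mul_of_nonneg_left hlog h.le
      have h2 : y ℓ * (p ℓ / y ℓ - 1) = p ℓ - y ℓ := by
        field_simp
      rw [hinv]
      nlinarith
  calc (0 : ℝ) = ∑ ℓ, (y ℓ - p ℓ) := by rw [Finset.sum_sub_distrib, hys, hps]; ring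
  _ ≤ KL y p := Finset.sum_le_sum fun ℓ _ => key ℓ

lemma KL_self {L : ℕ} (p : Fin (L + 1) → ℝ) (hp : ∀ ℓ, 0 < p ℓ) : KL p p = 0 := by
  unfold KL
  refine Finset.sum_eq_zero fun ℓ _ => ?_
  rw [div_self (hp ℓ).ne', Real.log_one, mul_zero]

lemma KL_convex {L : ℕ} (a b r : Fin (L + 1) → ℝ) (ha : ∀ ℓ, 0 ≤ a ℓ)
    (hb : ∀ ℓ, 0 ≤ b ℓ) (hr : ∀ ℓ, 0 < r ℓ) {t : ℝ} (ht0 : 0 ≤ t) (ht1 : t ≤ 1) :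
    KL (fun ℓ => (1 - t) * a ℓ + t * b ℓ) r ≤ (1 - t) * KL a r + t * KL b r := by
  rw [KL_eq _ r hr, KL_eq a r hr, KL_eq b r hr, Finset.mul_sum, Finset.mul_sum,
    ← Finset.sum_add_distrib]
  refine Finset.sum_le_sum fun ℓ _ => ?_
  have hconv := Real.convexOn_mul_log.2 (Set.mem_Ici.2 (ha ℓ)) (Set.mem_Ici.2 (hb ℓ))
    (by linarith : (0:ℝ) ≤ 1 - t) ht0 (by ring)
  simp only [smul_eq_mul] at hconv
  nlinarith [hconv]

lemma minimax_aux {K L : ℕ} (α : Fin K → ℝ) (hα : ∀ k, 0 < α k)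
    (p1 p2 : Fin K → Fin (L + 1) → ℝ)
    (hp1 : ∀ k ℓ, 0 < p1 k ℓ) (hp1s : ∀ k, ∑ ℓ, p1 k ℓ = 1)
    (hp2 : ∀ k ℓ, 0 < p2 k ℓ) (hp2s : ∀ k, ∑ ℓ, p2 k ℓ = 1)
    (q : Fin K → Fin (L + 1) → ℝ) (hq1 : ∀ k ℓ, 0 ≤ q k ℓ) (hq2 : ∀ k, ∑ ℓ, q k ℓ = 1)
    (hmin : ∀ y : Fin K → Fin (L + 1) → ℝ, (∀ k ℓ, 0 ≤ y k ℓ) → (∀ k, ∑ ℓ, y k ℓ = 1) →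
      max (∑ k, α k * KL (q k) (p1 k)) (∑ k, α k * KL (q k) (p2 k)) ≤
      max (∑ k, α k * KL (y k) (p1 k)) (∑ k, α k * KL (y k) (p2 k)))
    (hlt : ∑ k, α k * KL (q k) (p2 k) < ∑ k, α k * KL (q k) (p1 k)) : False := by
  set A := ∑ k, α k * KL (q k) (p1 k) with hAdef
  set B := ∑ k, α k * KL (q k) (p2 k) with hBdef
  have hB0 : 0 ≤ B := Finset.sum_nonneg fun k _ =>
    mul_nonneg (hα k).le (KL_nonneg _ _ (hq1 k) (hq2 k) (hp2 k) (hp2s k))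
  have hA0 : 0 < A := lt_of_le_of_lt hB0 hlt
  set φ : ℝ → ℝ := fun t =>
    ∑ k, α k * KL (fun ℓ => (1 - t) * q k ℓ + t * p1 k ℓ) (p2 k) with hφdef
  have φcont : Continuous φ := by
    refine continuous_finset_sum _ fun k _ => continuous_const.mul ?_
    exact (KL_continuous (p2 k) (hp2 k)).comp (by fun_prop)
  have hφ0 : φ 0 = B := by simp [hφdef, hBdef]
  have hev : ∀ᶠ t in nhds (0 : ℝ), φ t < A :=
    (φcont.tendsto 0).eventually_lt_const (hφ0 ▸ hlt)
  have hev1 : ∀ᶠ t in nhds (0 : ℝ), t < 1 := gt_mem_nhds one_pos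
  obtain ⟨t, ⟨htφ, ht1⟩, htpos⟩ := (((hev.and hev1).filter_mono nhdsWithin_le_nhds).and
    self_mem_nhdsWithin).exists (f := nhdsWithin (0:ℝ) (Set.Ioi 0))
  have htpos' : (0:ℝ) < t := Set.mem_Ioi.mp htpos
  set y : Fin K → Fin (L + 1) → ℝ := fun k ℓ => (1 - t) * q k ℓ + t * p1 k ℓ with hydef
  have hy1 : ∀ k ℓ, 0 ≤ y k ℓ := fun k ℓ =>
    add_nonneg (mul_nonneg (by linarith) (hq1 k ℓ)) (mul_nonneg htpos'.le (hp1 k ℓ).le)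
  have hy2 : ∀ k, ∑ ℓ, y k ℓ = 1 := by
    intro k
    simp only [hydef]
    rw [Finset.sum_add_distrib, ← Finset.mul_sum, ← Finset.mul_sum, hq2, hp1s]
    ring
  have hS1 : ∑ k, α k * KL (y k) (p1 k) ≤ (1 - t) * A := by
    have step : ∀ k ∈ Finset.univ, α k * KL (y k) (p1 k) ≤
        α k * ((1 - t) * KL (q k) (p1 k)) := by
      intro k _
      refine mul_le_mul_of_nonneg_left ?_ (hα k).le
      have := KL_convex (q k) (p1 k) (p1 k) (hq1 k) (fun ℓ => (hp1 k ℓ).le) (hp1 k)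
        htpos'.le ht1.le
      rw [KL_self (p1 k) (hp1 k)] at this
      simpa using this
    calc ∑ k, α k * KL (y k) (p1 k) ≤ ∑ k, α k * ((1 - t) * KL (q k) (p1 k)) :=
          Finset.sum_le_sum step
    _ = (1 - t) * A := by rw [hAdef, Finset.mul_sum]; exact Finset.sum_congr rfl fun k _ => by ring
  have hS2 : ∑ k, α k * KL (y k) (p2 k) = φ t := rfl
  have hmax : max (∑ k, α k * KL (y k) (p1 k)) (∑ k, α k * KL (y k) (p2 k)) < A := by
    refine max_lt (lt_of_le_of_lt hS1 ?_) (hS2 ▸ htφ)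
    nlinarith
  have := hmin y hy1 hy2
  rw [max_eq_left hlt.le] at this
  exact absurd this (not_le.2 hmax)

/-- The minimax functional
`F(y) = max(∑ₖ αₖ KL(y k, pᵢ k), ∑ₖ αₖ KL(y k, pⱼ k))` over the product of
simplices attains its minimum, and any minimizer equalizes the two weighted
KL sums, provided `pᵢ k ≠ pⱼ k` for some `k`. -/
theorem minimax_kl_attained_and_equalized (K L : ℕ) (hK : 1 ≤ K) (hL : 1 ≤ L)
    (α : Fin K → ℝ) (hα : ∀ k, 0 < α k) (hαs : ∑ k, α k = 1)
    (pi pj : Fin K → Fin (L + 1) → ℝ)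
    (hpi : ∀ k ℓ, 0 < pi k ℓ) (hpis : ∀ k, ∑ ℓ, pi k ℓ = 1)
    (hpj : ∀ k ℓ, 0 < pj k ℓ) (hpjs : ∀ k, ∑ ℓ, pj k ℓ = 1)
    (hne : ∃ k, pi k ≠ pj k)
    (P : Set (Fin K → Fin (L + 1) → ℝ))
    (hP : P = {y | (∀ k ℓ, 0 ≤ y k ℓ) ∧ ∀ k, ∑ ℓ, y k ℓ = 1})
    (F : (Fin K → Fin (L + 1) → ℝ) → ℝ)
    (hF : ∀ y, F y = max (∑ k, α k * KL (y k) (pi k)) (∑ k, α k * KL (y k) (pj k))) :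
    (∃ q ∈ P, ∀ y ∈ P, F q ≤ F y) ∧
      ∀ q ∈ P, (∀ y ∈ P, F q ≤ F y) →
        ∑ k, α k * KL (q k) (pi k) = ∑ k, α k * KL (q k) (pj k) := by
  have hPeq : P = Set.univ.pi fun _ : Fin K => stdSimplex ℝ (Fin (L + 1)) := by
    rw [hP]
    ext y
    simp [stdSimplex, Set.mem_pi, forall_and]
  have hPc : IsCompact P := hPeq ▸ isCompact_univ_pi fun _ => isCompact_stdSimplex _ _
  have hPne : P.Nonempty := ⟨pi, by rw [hP]; exact ⟨fun k ℓ => (hpi k ℓ).le, hpis⟩⟩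
  have hFc : Continuous F := by
    have h : F = fun y => max (∑ k, α k * KL (y k) (pi k)) (∑ k, α k * KL (y k) (pj k)) :=
      funext hF
    rw [h]
    exact Continuous.max
      (continuous_finset_sum _ fun k _ => continuous_const.mul
        ((KL_continuous _ (hpi k)).comp (continuous_apply k)))
      (continuous_finset_sum _ fun k _ => continuous_const.mul
        ((KL_continuous _ (hpj k)).comp (continuous_apply k)))
  constructor
  · obtain ⟨q, hq, hqmin⟩ := hPc.exists_isMinOn hPne hFc.continuousOn
    exact ⟨q, hq, fun y hy => isMinOn_iff.mp hqmin y hy⟩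
  · intro q hq hmin
    rw [hP] at hq
    obtain ⟨hq1, hq2⟩ := hq
    by_contra hne2
    rcases lt_or_gt_of_ne hne2 with h | h
    · -- ∑ KL q pi < ∑ KL q pj : apply aux with p1 = pj, p2 = pi
      refine minimax_aux α hα pj pi hpj hpjs hpi hpis q hq1 hq2 ?_ h
      intro y hy1 hy2
      have := hmin y (by rw [hP]; exact ⟨hy1, hy2⟩)
      rw [hF, hF] at this
      rw [max_comm (∑ k, α k * KL (q k) (pj k)), max_comm (∑ k, α k * KL (y k) (pj k))]
      exact this
    · refine minimax_aux α hα pi pj hpi hpis hpj hpjs q hq1 hq2 ?_ h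
      intro y hy1 hy2
      have := hmin y (by rw [hP]; exact ⟨hy1, hy2⟩)
      rw [hF, hF] at this
      exact this
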